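/- Theorem (ℓ₁ strong convexity of the dilatable global entropy). For every x ∈ Q with x_σ > 0 for all σ ∈ Σ, and for every vector m ∈ ℝ^Σ, the Hessian of the dilatable global entropy φ̃ at x satisfies m^⊤ ∇²φ̃(x) m = Σ_{σ∈Σ} w_σ m_σ² / x_σ ≥ (1/M_Q)·‖m‖₁², where M_Q := max_{x∈Q} ‖x‖₁. In particular, φ̃ is strongly convex with modulus 1/M_Q with respect to the ℓ₁ norm on the strictly positive part of Q. -/

import Mathlib

open Finset

lemma dge_aux_hessian {ι : Type} [Fintype ι] [DecidableEq ι]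
    (w : ι → ℝ) (L0 : (ι → ℝ) →L[ℝ] ℝ) (x : ι → ℝ) (hx : ∀ σ, 0 < x σ) (m : ι → ℝ) :
    iteratedFDeriv ℝ 2
      (fun y : ι → ℝ => (∑ σ, w σ * (y σ * Real.log (y σ))) + L0 y) x ![m, m]
      = ∑ σ, w σ * (m σ) ^ 2 / x σ := by
  set φ : (ι → ℝ) → ℝ := fun y => (∑ σ, w σ * (y σ * Real.log (y σ))) + L0 y with hφ
  set pr : ι → ((ι → ℝ) →L[ℝ] ℝ) := fun σ => ContinuousLinearMap.proj σ with hpr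
  set F : (ι → ℝ) → ((ι → ℝ) →L[ℝ] ℝ) :=
    fun y => (∑ σ, (w σ * (Real.log (y σ) + 1)) • pr σ) + L0 with hF
  set G : (ι → ℝ) →L[ℝ] ((ι → ℝ) →L[ℝ] ℝ) :=
    ∑ σ, ((w σ / x σ) • pr σ).smulRight (pr σ) with hG
  -- Step 1: φ has derivative F y at any y with positive coordinates
  have step1 : ∀ y : ι → ℝ, (∀ σ, 0 < y σ) → HasFDerivAt φ (F y) y := by
    intro y hy
    have hsum : HasFDerivAt (fun z : ι → ℝ => ∑ σ, w σ * (z σ * Real.log (z σ)))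
        (∑ σ, (w σ * (Real.log (y σ) + 1)) • pr σ) y := by
      refine HasFDerivAt.fun_sum fun σ _ => ?_
      have h1 : HasDerivAt (fun t : ℝ => t * Real.log t) (Real.log (y σ) + 1) (y σ) := by
        have := (hasDerivAt_id (y σ)).fun_mul (Real.hasDerivAt_log (hy σ).ne')
        simpa [mul_inv_cancel₀ (hy σ).ne', add_comm] using this
      have h2 : HasFDerivAt (fun z : ι → ℝ => z σ) (pr σ) y := (pr σ).hasFDerivAt
      have h3 := h1.comp_hasFDerivAt y h2
      have h4 := h3.const_mul (w σ)
      simpa [smul_smul] using h4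
    simpa [hF] using hsum.fun_add L0.hasFDerivAt
  -- Step 2: fderiv φ = F near x
  have hnhds : ∀ᶠ y in nhds x, ∀ σ, 0 < y σ := by
    rw [Filter.eventually_all]
    intro σ
    exact (continuous_apply σ).continuousAt.eventually_mem
      (Ioi_mem_nhds (hx σ) : Set.Ioi (0:ℝ) ∈ nhds (x σ))
  have hEq : fderiv ℝ φ =ᶠ[nhds x] F := hnhds.mono fun y hy => (step1 y hy).fderiv
  -- Step 3: F has derivative G at x
  have step3 : HasFDerivAt F G x := by
    have hsum : HasFDerivAt (fun y : ι → ℝ => ∑ σ, (w σ * (Real.log (y σ) + 1)) • pr σ) G x := by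
      rw [hG]
      refine HasFDerivAt.fun_sum fun σ _ => ?_
      have h2 : HasFDerivAt (fun z : ι → ℝ => z σ) (pr σ) x := (pr σ).hasFDerivAt
      have hlog : HasFDerivAt (fun z : ι → ℝ => Real.log (z σ)) ((x σ)⁻¹ • pr σ) x := by
        simpa [Function.comp_def] using (Real.hasDerivAt_log (hx σ).ne').comp_hasFDerivAt x h2
      have hc : HasFDerivAt (fun z : ι → ℝ => w σ * (Real.log (z σ) + 1))
          ((w σ / x σ) • pr σ) x := by
        have := (hlog.add_const 1).const_mul (w σ)
        simpa [smul_smul, div_eq_mul_inv] using this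
      exact hc.smul_const (pr σ)
    simpa [hF] using hsum.add_const L0
  -- Conclude
  have key : fderiv ℝ (fderiv ℝ φ) x = G := by
    rw [hEq.fderiv_eq]; exact step3.fderiv
  rw [iteratedFDeriv_two_apply, key, hG]
  simp only [Matrix.cons_val_zero, Matrix.cons_val_one, Matrix.head_cons,
    ContinuousLinearMap.sum_apply, ContinuousLinearMap.smulRight_apply,
    ContinuousLinearMap.smul_apply, ContinuousLinearMap.proj_apply, smul_eq_mul, hpr]
  refine Finset.sum_congr rfl fun σ _ => ?_
  field_simp

/-- **ℓ₁ strong convexity of the dilatable global entropy.** For every `x ∈ Q` with all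
coordinates strictly positive and every `m`, the Hessian quadratic form of `φ̃` at `x` equals
`∑ σ, w σ * m σ ^ 2 / x σ`, which is at least `(1/M_Q) * ‖m‖₁²`, where
`M_Q = max_{x ∈ Q} ‖x‖₁`. -/
theorem dge_l1_strong_convexity
    {J : Type} [Fintype J] [DecidableEq J]
    {A : J → Type} [∀ j, Fintype (A j)] [∀ j, DecidableEq (A j)] [∀ j, Nonempty (A j)]
    (p : J → Option ((j : J) × A j))
    (hwf : WellFounded (fun j' j : J => ∃ a : A j, p j' = some ⟨j, a⟩))
    (γ : J → ℝ) (γ0 : ℝ)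
    (hγ : ∀ j : J, γ j = 1 + (Finset.univ : Finset (A j)).sup' Finset.univ_nonempty
        (fun a => ∑ j' ∈ Finset.univ.filter (fun j' => p j' = some ⟨j, a⟩), γ j'))
    (hγ0 : γ0 = 1 + ∑ j ∈ Finset.univ.filter (fun j : J => p j = none), γ j)
    (w : Option ((j : J) × A j) → ℝ)
    (hw0 : w none = γ0 - ∑ j ∈ Finset.univ.filter (fun j : J => p j = none), γ j)
    (hw : ∀ (j : J) (a : A j),
      w (some ⟨j, a⟩) = γ j - ∑ j' ∈ Finset.univ.filter (fun j' => p j' = some ⟨j, a⟩), γ j')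
    (Q : Set (Option ((j : J) × A j) → ℝ))
    (hQ : Q = {x | (∀ σ, 0 ≤ x σ) ∧ x none = 1 ∧
        ∀ j : J, ∑ a : A j, x (some ⟨j, a⟩) = x (p j)})
    (M : ℝ)
    (hM : IsGreatest ((fun x : Option ((j : J) × A j) → ℝ => ∑ σ, |x σ|) '' Q) M)
    (φ : (Option ((j : J) × A j) → ℝ) → ℝ)
    (hφ : φ = fun x => w none * (x none * Real.log (x none))
      + (∑ j : J, ∑ a : A j, w (some ⟨j, a⟩) * (x (some ⟨j, a⟩) * Real.log (x (some ⟨j, a⟩))))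
      + (∑ j : J, γ j * (x (p j) * Real.log ((Fintype.card (A j) : ℝ)))))
    (x : Option ((j : J) × A j) → ℝ)
    (hxQ : x ∈ Q) (hxpos : ∀ σ, 0 < x σ)
    (m : Option ((j : J) × A j) → ℝ) :
    iteratedFDeriv ℝ 2 φ x ![m, m] = ∑ σ, w σ * (m σ) ^ 2 / x σ ∧
    ∑ σ, w σ * (m σ) ^ 2 / x σ ≥ (1 / M) * (∑ σ, |m σ|) ^ 2 := by
  classical
  -- positivity facts about weights
  have hw1 : ∀ σ, 1 ≤ w σ := by
    rintro (_ | ⟨j, a⟩)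
    · rw [hw0, hγ0]; simp
    · rw [hw j a, hγ j]
      have hle := Finset.le_sup' (α := ℝ)
        (fun a' : A j => ∑ j' ∈ Finset.univ.filter (fun j' => p j' = some ⟨j, a'⟩), γ j')
        (Finset.mem_univ a)
      simpa using by linarith
  constructor
  · -- Hessian computation
    set L0 : ((Option ((j : J) × A j)) → ℝ) →L[ℝ] ℝ :=
      ∑ j : J, (γ j * Real.log ((Fintype.card (A j) : ℝ))) • ContinuousLinearMap.proj (p j)
      with hL0
    have hφ' : φ = fun y => (∑ σ, w σ * (y σ * Real.log (y σ))) + L0 y := by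
      rw [hφ]; funext y
      have e1 : (∑ σ : Option ((j : J) × A j), w σ * (y σ * Real.log (y σ)))
          = w none * (y none * Real.log (y none))
            + ∑ j : J, ∑ a : A j, w (some ⟨j, a⟩)
                * (y (some ⟨j, a⟩) * Real.log (y (some ⟨j, a⟩))) := by
        rw [show (Finset.univ : Finset (Option ((j : J) × A j)))
            = Finset.insertNone Finset.univ from rfl, Finset.sum_insertNone,
          ← Finset.univ_sigma_univ, Finset.sum_sigma]
      have e2 : L0 y = ∑ j : J, γ j * (y (p j) * Real.log ((Fintype.card (A j) : ℝ))) := by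
        rw [hL0]
        simp only [ContinuousLinearMap.sum_apply, ContinuousLinearMap.smul_apply,
          ContinuousLinearMap.proj_apply, smul_eq_mul]
        exact Finset.sum_congr rfl fun j _ => by ring
      rw [e1, e2]
    rw [hφ']
    exact dge_aux_hessian w L0 x hxpos m
  · -- the inequality
    have hxM : ∑ σ, |x σ| ≤ M := hM.2 (Set.mem_image_of_mem _ hxQ)
    rw [hQ] at hxQ
    obtain ⟨hx0, hxnone, -⟩ := hxQ
    have hM1 : (1 : ℝ) ≤ M := by
      have h := Finset.single_le_sum (f := fun σ => |x σ|)
        (fun i _ => abs_nonneg _) (Finset.mem_univ (none : Option ((j : J) × A j)))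
      simpa [hxnone] using h.trans hxM
    have hMpos : (0 : ℝ) < M := lt_of_lt_of_le one_pos hM1
    have hfnn : (0 : ℝ) ≤ ∑ σ, w σ * (m σ) ^ 2 / x σ :=
      Finset.sum_nonneg fun σ _ => div_nonneg
        (mul_nonneg (zero_le_one.trans (hw1 σ)) (sq_nonneg _)) (hxpos σ).le
    have hgle : ∑ σ, x σ / w σ ≤ M := by
      refine le_trans (le_trans (Finset.sum_le_sum fun σ _ =>
        div_le_self (hxpos σ).le (hw1 σ)) (le_of_eq ?_)) hxM
      exact Finset.sum_congr rfl fun σ _ => (abs_of_pos (hxpos σ)).symm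
    have CS : (∑ σ, |m σ|) ^ 2 ≤ (∑ σ, w σ * (m σ) ^ 2 / x σ) * (∑ σ, x σ / w σ) := by
      refine Finset.sum_sq_le_sum_mul_sum_of_sq_eq_mul Finset.univ
        (fun σ _ => div_nonneg
          (mul_nonneg (zero_le_one.trans (hw1 σ)) (sq_nonneg _)) (hxpos σ).le)
        (fun σ _ => div_nonneg (hxpos σ).le (zero_le_one.trans (hw1 σ)))
        (fun σ _ => ?_)
      rw [sq_abs]
      have hxne := (hxpos σ).ne'
      have hwne : w σ ≠ 0 := by have := hw1 σ; linarith
      field_simp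
    have h2 : (∑ σ, |m σ|) ^ 2 ≤ (∑ σ, w σ * (m σ) ^ 2 / x σ) * M :=
      CS.trans (mul_le_mul_of_nonneg_left hgle hfnn)
    have h3 : (1 / M) * (∑ σ, |m σ|) ^ 2 ≤ (1 / M) * ((∑ σ, w σ * (m σ) ^ 2 / x σ) * M) :=
      mul_le_mul_of_nonneg_left h2 (by positivity)
    have h4 : (1 / M) * ((∑ σ, w σ * (m σ) ^ 2 / x σ) * M) = ∑ σ, w σ * (m σ) ^ 2 / x σ := by
      field_simp
    rw [ge_iff_le]
    exact h3.trans_eq h4
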